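/- Let d₁, d₂ be natural numbers, let ρ₂₁ be any matrix on ℂ^{d₂} ⊗ ℂ^{d₁}, let O₁ be a d₁ × d₁ complex matrix and O₂ a d₂ × d₂ complex matrix, each unitary with all entries real (i.e. real orthogonal), and set ρ̃₂₁ = (O₂ ⊗ O₁) · ρ₂₁ · (O₂ ⊗ O₁)†. Then R(ρ₂₁) = (O₂ ⊗ O₂)† · R(ρ̃₂₁) · (O₁ ⊗ O₁); that is, under local orthogonal transformations plain realignment transforms covariantly in the same way as the realigned partial transpose does under local unitaries. -/
import Mathlib


open Matrix Kronecker

noncomputable section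

/-- Partial transpose on the second tensor factor. -/
def PT1 {d₂ d₁ : ℕ} (M : Matrix (Fin d₂ × Fin d₁) (Fin d₂ × Fin d₁) ℂ) :
    Matrix (Fin d₂ × Fin d₁) (Fin d₂ × Fin d₁) ℂ :=
  fun p q => M (p.1, q.2) (q.1, p.2)

/-- Realignment. -/
def realign {d₂ d₁ : ℕ} (M : Matrix (Fin d₂ × Fin d₁) (Fin d₂ × Fin d₁) ℂ) :
    Matrix (Fin d₂ × Fin d₂) (Fin d₁ × Fin d₁) ℂ :=
  fun p q => M (p.1, q.1) (p.2, q.2)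

/-- Swap reindexing. -/
def swapRe {d₂ d₁ : ℕ} (ρ : Matrix (Fin d₂ × Fin d₁) (Fin d₂ × Fin d₁) ℂ) :
    Matrix (Fin d₁ × Fin d₂) (Fin d₁ × Fin d₂) ℂ :=
  fun p q => ρ (p.2, p.1) (q.2, q.1)

/-- SWAP operator. -/
def swapOp (d : ℕ) : Matrix (Fin d × Fin d) (Fin d × Fin d) ℂ :=
  fun p q => if p.1 = q.2 ∧ p.2 = q.1 then 1 else 0

lemma realign_mul {d₁ d₂ : ℕ} (X Z : Matrix (Fin d₂) (Fin d₂) ℂ)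
    (Y W : Matrix (Fin d₁) (Fin d₁) ℂ)
    (M : Matrix (Fin d₂ × Fin d₁) (Fin d₂ × Fin d₁) ℂ) :
    realign ((X ⊗ₖ Y) * M * (Z ⊗ₖ W)) = (X ⊗ₖ Zᵀ) * realign M * (Yᵀ ⊗ₖ W) := by
  ext ⟨i,j⟩ ⟨α,β⟩
  simp only [realign, Matrix.mul_apply, kroneckerMap_apply, transpose_apply,
    Finset.sum_mul, Finset.mul_sum]
  rw [← Finset.sum_product', ← Finset.sum_product', Finset.univ_product_univ,
    Finset.univ_product_univ]
  refine Fintype.sum_equiv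
    ⟨fun x => ((x.2.2, x.1.2), (x.2.1, x.1.1)),
     fun y => ((y.2.2, y.1.2), (y.2.1, y.1.1)),
     fun x => rfl, fun y => rfl⟩ _ _ ?_
  rintro ⟨⟨l,δ⟩,k,γ⟩
  dsimp
  ring

lemma kron_conjT {m n : ℕ} (A : Matrix (Fin m) (Fin m) ℂ) (B : Matrix (Fin n) (Fin n) ℂ) :
    (A ⊗ₖ B)ᴴ = Aᴴ ⊗ₖ Bᴴ := by
  ext ⟨i,j⟩ ⟨k,l⟩
  simp [conjTranspose_apply, kroneckerMap_apply]

/-- under local real orthogonal transformations, plain realignment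
transforms covariantly: R(ρ₂₁) = (O₂ ⊗ O₂)† · R(ρ̃₂₁) · (O₁ ⊗ O₁). -/
theorem stmt8 {d₁ d₂ : ℕ}
    (ρ₂₁ : Matrix (Fin d₂ × Fin d₁) (Fin d₂ × Fin d₁) ℂ)
    (O₁ : Matrix (Fin d₁) (Fin d₁) ℂ) (O₂ : Matrix (Fin d₂) (Fin d₂) ℂ)
    (hO₁ : O₁ ∈ Matrix.unitaryGroup (Fin d₁) ℂ)
    (hO₂ : O₂ ∈ Matrix.unitaryGroup (Fin d₂) ℂ)
    (hO₁real : ∀ i j, (O₁ i j).im = 0)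
    (hO₂real : ∀ i j, (O₂ i j).im = 0) :
    realign ρ₂₁ =
      (O₂ ⊗ₖ O₂)ᴴ *
        realign ((O₂ ⊗ₖ O₁) * ρ₂₁ * (O₂ ⊗ₖ O₁)ᴴ) *
        (O₁ ⊗ₖ O₁) := by

  have c1 : O₁ᴴ = O₁ᵀ := by
    ext i j
    exact Complex.conj_eq_iff_im.mpr (hO₁real j i)
  have c2 : O₂ᴴ = O₂ᵀ := by
    ext i j
    exact Complex.conj_eq_iff_im.mpr (hO₂real j i)
  have u2 : (O₂ ⊗ₖ O₂)ᴴ * (O₂ ⊗ₖ O₂) = 1 := by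
    rw [kron_conjT, ← Matrix.mul_kronecker_mul, ← Matrix.star_eq_conjTranspose, hO₂.1,
      Matrix.one_kronecker_one]
  have u1 : (O₁ ⊗ₖ O₁)ᴴ * (O₁ ⊗ₖ O₁) = 1 := by
    rw [kron_conjT, ← Matrix.mul_kronecker_mul, ← Matrix.star_eq_conjTranspose, hO₁.1,
      Matrix.one_kronecker_one]
  rw [kron_conjT O₂ O₁, realign_mul]
  rw [show (O₂ᴴ)ᵀ = O₂ by rw [c2, Matrix.transpose_transpose]]
  rw [show O₁ᵀ ⊗ₖ O₁ᴴ = (O₁ ⊗ₖ O₁)ᴴ by rw [kron_conjT, c1]]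
  rw [← Matrix.mul_assoc, ← Matrix.mul_assoc, u2, Matrix.one_mul,
    Matrix.mul_assoc, u1, Matrix.mul_one]
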